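/- Let q ≠ 1 be an integer. If a group G contains two elements a, b of infinite order satisfying b·a·b⁻¹ = a^q, then G contains a subgroup isomorphic to BS(1,q). -/

import Mathlib

/-- Relators of the Baumslag–Solitar group BS(1,q) = ⟨a, b ∣ b a b⁻¹ = a^q⟩,
with `a = FreeGroup.of false` and `b = FreeGroup.of true`. -/
def BSrels (q : ℤ) : Set (FreeGroup Bool) :=
  {FreeGroup.of true * FreeGroup.of false * (FreeGroup.of true)⁻¹ * (FreeGroup.of false) ^ (-q)}

/-- The Baumslag–Solitar group BS(1,q). -/
def BS (q : ℤ) : Type := PresentedGroup (BSrels q)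

instance (q : ℤ) : Group (BS q) := by unfold BS; infer_instance

/-- The generator `a` of BS(1,q). -/
def BSa (q : ℤ) : BS q := PresentedGroup.of false

/-- The generator `b` of BS(1,q). -/
def BSb (q : ℤ) : BS q := PresentedGroup.of true

section aux
variable {G : Type*} [Group G] {q : ℤ} (x y : G) (hy : y * x * y⁻¹ = x ^ q)

include hy in
lemma conj_zpow_rel (m : ℤ) : y * x ^ m * y⁻¹ = x ^ (q * m) := by
  rw [← conj_zpow, hy, ← zpow_mul]

include hy in
lemma move_pow : ∀ (k : ℕ) (m : ℤ), y ^ k * x ^ m = x ^ ((q ^ k : ℤ) * m) * y ^ k := by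
  intro k
  induction k with
  | zero => intro m; simp
  | succ k ih =>
    intro m
    have h1 : y * x ^ m = x ^ (q * m) * y := by
      have := conj_zpow_rel x y hy m
      group at this ⊢
      rw [← this]; group
    calc y ^ (k+1) * x ^ m = y ^ k * (y * x ^ m) := by rw [pow_succ]; group
      _ = y ^ k * (x ^ (q * m) * y) := by rw [h1]
      _ = (y ^ k * x ^ (q * m)) * y := by group
      _ = x ^ ((q ^ k : ℤ) * (q * m)) * y ^ k * y := by rw [ih]
      _ = x ^ ((q ^ (k+1) : ℤ) * m) * y ^ (k+1) := by
          rw [pow_succ, pow_succ]; ring_nf; group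

include hy in
lemma move_inv (k : ℕ) (m : ℤ) : x ^ m * (y ^ k)⁻¹ = (y ^ k)⁻¹ * x ^ ((q ^ k : ℤ) * m) := by
  have := move_pow x y hy k m
  calc x ^ m * (y ^ k)⁻¹ = (y ^ k)⁻¹ * (y ^ k * x ^ m) * (y ^ k)⁻¹ := by group
    _ = (y ^ k)⁻¹ * (x ^ ((q ^ k : ℤ) * m) * y ^ k) * (y ^ k)⁻¹ := by rw [this]
    _ = (y ^ k)⁻¹ * x ^ ((q ^ k : ℤ) * m) := by group

include hy in
lemma normal_form : ∀ g ∈ Subgroup.closure {x, y},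
    ∃ (i j : ℕ) (m : ℤ), g = (y ^ i)⁻¹ * x ^ m * y ^ j := by
  intro g hg
  induction hg using Subgroup.closure_induction with
  | mem z hz =>
    rcases hz with rfl | rfl
    · exact ⟨0, 0, 1, by simp⟩
    · exact ⟨0, 1, 0, by simp⟩
  | one => exact ⟨0, 0, 0, by simp⟩
  | mul g g' hg hg' ihg ihg' =>
    obtain ⟨i, j, m, rfl⟩ := ihg
    obtain ⟨i', j', m', rfl⟩ := ihg'
    rcases le_or_gt i' j with h | h
    · refine ⟨i, (j - i') + j', m + (q ^ (j - i') : ℤ) * m', ?_⟩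
      symm
      have hj : y ^ j = y ^ (j - i') * y ^ i' := by rw [← pow_add]; congr 1; omega
      calc (y ^ i)⁻¹ * x ^ (m + (q ^ (j-i') : ℤ) * m') * y ^ ((j-i') + j')
          = (y ^ i)⁻¹ * (x ^ m * (x ^ ((q ^ (j-i') : ℤ) * m') * y ^ (j-i'))) * y ^ j' := by
            rw [zpow_add, pow_add]; group
        _ = (y ^ i)⁻¹ * (x ^ m * (y ^ (j-i') * x ^ m')) * y ^ j' := by
            rw [move_pow x y hy]
        _ = ((y ^ i)⁻¹ * x ^ m * (y ^ (j-i') * y ^ i')) * ((y ^ i')⁻¹ * x ^ m' * y ^ j') := by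
            group
        _ = ((y ^ i)⁻¹ * x ^ m * y ^ j) * ((y ^ i')⁻¹ * x ^ m' * y ^ j') := by rw [← hj]
    · refine ⟨i + (i' - j), j', (q ^ (i' - j) : ℤ) * m + m', ?_⟩
      symm
      have hi' : y ^ i' = y ^ (i' - j) * y ^ j := by rw [← pow_add]; congr 1; omega
      calc (y ^ (i + (i'-j)))⁻¹ * x ^ ((q ^ (i'-j) : ℤ) * m + m') * y ^ j'
          = (y ^ i)⁻¹ * ((y ^ (i'-j))⁻¹ * x ^ ((q ^ (i'-j) : ℤ) * m)) * x ^ m' * y ^ j' := by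
            rw [zpow_add, pow_add]; group
        _ = (y ^ i)⁻¹ * (x ^ m * (y ^ (i'-j))⁻¹) * x ^ m' * y ^ j' := by
            rw [← move_inv x y hy]
        _ = ((y ^ i)⁻¹ * x ^ m * y ^ j) * ((y ^ (i'-j) * y ^ j)⁻¹ * x ^ m' * y ^ j') := by
            group
        _ = ((y ^ i)⁻¹ * x ^ m * y ^ j) * ((y ^ i')⁻¹ * x ^ m' * y ^ j') := by rw [← hi']
  | inv g hg ihg =>
    obtain ⟨i, j, m, rfl⟩ := ihg
    exact ⟨j, i, -m, by group⟩

end aux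

lemma BS_rel (q : ℤ) : BSb q * BSa q * (BSb q)⁻¹ = BSa q ^ q := by
  have h1 : PresentedGroup.mk (BSrels q)
      (FreeGroup.of true * FreeGroup.of false * (FreeGroup.of true)⁻¹ *
        (FreeGroup.of false) ^ (-q)) = 1 := by
    exact (QuotientGroup.eq_one_iff _).mpr
      (Subgroup.subset_normalClosure (show _ ∈ BSrels q from rfl))
  have h2 : BSb q * BSa q * (BSb q)⁻¹ * (BSa q) ^ (-q) = 1 := by
    rw [map_mul, map_mul, map_mul, map_inv, map_zpow] at h1; exact h1
  calc BSb q * BSa q * (BSb q)⁻¹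
      = BSb q * BSa q * (BSb q)⁻¹ * (BSa q) ^ (-q) * (BSa q) ^ q := by group
    _ = (BSa q) ^ q := by rw [h2]; group

lemma BS_mem_closure (q : ℤ) (g : BS q) : g ∈ Subgroup.closure {BSa q, BSb q} := by
  apply PresentedGroup.generated_by
  intro j
  cases j
  · exact Subgroup.subset_closure (Set.mem_insert _ _)
  · exact Subgroup.subset_closure (Set.mem_insert_iff.mpr (Or.inr rfl))

theorem stmt18 {q : ℤ} (hq : q ≠ 1) {G : Type*} [Group G] (a b : G)
    (ha : ¬IsOfFinOrder a) (hb : ¬IsOfFinOrder b) (hrel : b * a * b⁻¹ = a ^ q) :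
    ∃ H : Subgroup G, Nonempty (H ≃* BS q) := by
  have hcond : ∀ r ∈ BSrels q,
      FreeGroup.lift (fun t => if t then b else a) r = 1 := by
    intro r hr
    obtain rfl := hr
    simp only [map_mul, map_inv, map_zpow, FreeGroup.lift_apply_of]
    show b * a * b⁻¹ * a ^ (-q) = 1
    rw [hrel]; group
  let φ : BS q →* G := PresentedGroup.toGroup hcond
  have hφa : φ (BSa q) = a := PresentedGroup.toGroup.of hcond
  have hφb : φ (BSb q) = b := PresentedGroup.toGroup.of hcond
  have hinj : Function.Injective φ := by
    apply (injective_iff_map_eq_one φ).mpr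
    intro w hw
    obtain ⟨i, j, m, rfl⟩ :=
      normal_form (BSa q) (BSb q) (BS_rel q) w (BS_mem_closure q w)
    have him : (b ^ i)⁻¹ * a ^ m * b ^ j = 1 := by
      simpa only [map_mul, map_inv, map_pow, map_zpow, hφa, hφb] using hw
    have ham : a ^ m = b ^ i * (b ^ j)⁻¹ := by
      calc a ^ m = b ^ i * ((b ^ i)⁻¹ * a ^ m * b ^ j) * (b ^ j)⁻¹ := by group
        _ = b ^ i * 1 * (b ^ j)⁻¹ := by rw [him]
        _ = b ^ i * (b ^ j)⁻¹ := by group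
    have h2 : b * a ^ m * b⁻¹ = a ^ (q * m) := conj_zpow_rel a b hrel m
    have h3 : b * (b ^ i * (b ^ j)⁻¹) * b⁻¹ = b ^ i * (b ^ j)⁻¹ := by group
    have h4 : a ^ (q * m) = a ^ m := by rw [← h2, ham, h3, ← ham]
    have hm : m = 0 := by
      by_contra hm
      apply ha
      rw [isOfFinOrder_iff_zpow_eq_one]
      refine ⟨q * m - m, ?_, ?_⟩
      · have : q * m - m = (q - 1) * m := by ring
        rw [this]
        exact mul_ne_zero (sub_ne_zero.mpr hq) hm
      · rw [zpow_sub, h4, mul_inv_cancel]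
    have hij : i = j := by
      have hb' : b ^ (i : ℤ) = b ^ (j : ℤ) := by
        rw [zpow_natCast, zpow_natCast]
        have : a ^ m = 1 := by rw [hm, zpow_zero]
        rw [this] at ham
        rw [← mul_inv_eq_one, ← ham]
      have := (injective_zpow_iff_not_isOfFinOrder.mpr hb) hb'
      exact_mod_cast this
    subst hij
    rw [hm, zpow_zero]
    group
  exact ⟨φ.range, ⟨(MonoidHom.ofInjective hinj).symm⟩⟩
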